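/- Let (α_i)_{i=1}^n and (β_j)_{j=1}^m be positive real numbers, and let P(n,m) be the set of monotone lattice paths σ from (0,0) to (n,m) in ℤ² (each step increasing one coordinate by 1). Then ∑_{σ ∈ P(n,m)} ∏_{i=1}^{n+m} 1/(α_{σ_x(i)} + β_{σ_y(i)}) = (∏_{i=1}^n 1/α_i)(∏_{j=1}^m 1/β_j), where σ_x(i), σ_y(i) denote the two coordinates of σ(i), with the convention α_0 = β_0 = 0. -/

import Mathlib

open Finset

/-- number of `true`s among `f 0, …, f (i-1)` -/
private def cntT (f : ℕ → Bool) : ℕ → ℕ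
  | 0 => 0
  | i + 1 => cntT f i + (if f i then 1 else 0)

private lemma cntT_le (f : ℕ → Bool) : ∀ i, cntT f i ≤ i
  | 0 => le_refl _
  | i + 1 => by have := cntT_le f i; simp only [cntT]; split <;> omega

private lemma cntT_mono (f : ℕ → Bool) {i j : ℕ} (h : i ≤ j) : cntT f i ≤ cntT f j := by
  induction j with
  | zero => obtain rfl := Nat.le_zero.mp h; exact le_refl _
  | succ j ih =>
    rcases Nat.lt_or_ge i (j + 1) with h' | h'
    · have := ih (by omega); simp only [cntT]; split <;> omega
    · obtain rfl : i = j + 1 := by omega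
      exact le_refl _

private lemma sub_cntT_mono (f : ℕ → Bool) {i j : ℕ} (h : i ≤ j) :
    i - cntT f i ≤ j - cntT f j := by
  induction j with
  | zero => obtain rfl := Nat.le_zero.mp h; exact le_refl _
  | succ j ih =>
    rcases Nat.lt_or_ge i (j + 1) with h' | h'
    · have h1 := ih (by omega)
      have h2 := cntT_le f j
      simp only [cntT]; split <;> omega
    · obtain rfl : i = j + 1 := by omega
      exact le_refl _

private lemma cntT_congr {f g : ℕ → Bool} {i : ℕ} (h : ∀ j, j < i → f j = g j) :
    cntT f i = cntT g i := by
  induction i with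
  | zero => rfl
  | succ i ih =>
    simp only [cntT, ih (fun j hj => h j (by omega)), h i (by omega)]

private def extB {k : ℕ} (f : Fin k → Bool) : ℕ → Bool :=
  fun j => if h : j < k then f ⟨j, h⟩ else false

private noncomputable def W (α β : ℕ → ℝ) (f : ℕ → Bool) (k : ℕ) : ℝ :=
  ∏ i ∈ Finset.range k, (α (cntT f (i + 1)) + β ((i + 1) - cntT f (i + 1)))⁻¹

private lemma extB_snoc_lt {k : ℕ} (g : Fin k → Bool) (x : Bool) {j : ℕ} (h : j < k) :
    extB (Fin.snoc g x) j = extB g j := by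
  simp only [extB, dif_pos h, dif_pos (Nat.lt_succ_of_lt h)]
  exact Fin.snoc_castSucc (α := fun _ => Bool) (p := g) (x := x) (i := ⟨j, h⟩)

private lemma extB_snoc_last {k : ℕ} (g : Fin k → Bool) (x : Bool) :
    extB (Fin.snoc g x) k = x := by
  simp only [extB, dif_pos (Nat.lt_succ_self k)]
  exact Fin.snoc_last (α := fun _ => Bool) (x := x) (p := g)

private lemma cntT_extB_snoc {k : ℕ} (g : Fin k → Bool) (x : Bool) {i : ℕ} (h : i ≤ k) :
    cntT (extB (Fin.snoc g x)) i = cntT (extB g) i :=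
  cntT_congr (fun j hj => extB_snoc_lt g x (by omega))

private lemma cntT_extB_snoc_top {k : ℕ} (g : Fin k → Bool) (x : Bool) :
    cntT (extB (Fin.snoc g x)) (k + 1) = cntT (extB g) k + (if x then 1 else 0) := by
  simp only [cntT, cntT_extB_snoc g x (le_refl k), extB_snoc_last]

private lemma W_snoc (α β : ℕ → ℝ) {k : ℕ} (g : Fin k → Bool) (x : Bool) :
    W α β (extB (Fin.snoc g x)) (k + 1) =
      W α β (extB g) k *
        (α (cntT (extB g) k + (if x then 1 else 0)) +
          β ((k + 1) - (cntT (extB g) k + (if x then 1 else 0))))⁻¹ := by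
  simp only [W, Finset.prod_range_succ]
  congr 1
  · refine Finset.prod_congr rfl fun i hi => ?_
    rw [Finset.mem_range] at hi
    rw [cntT_extB_snoc g x (by omega)]
  · rw [cntT_extB_snoc_top]

private lemma key (α β : ℕ → ℝ) (hα0 : α 0 = 0) (hβ0 : β 0 = 0) :
    ∀ k n m : ℕ, n + m = k →
      (∀ i, 1 ≤ i → i ≤ n → 0 < α i) → (∀ j, 1 ≤ j → j ≤ m → 0 < β j) →
      ∑ f ∈ Finset.univ.filter (fun f : Fin k → Bool => cntT (extB f) k = n),
          W α β (extB f) k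
        = (∏ i ∈ Finset.Icc 1 n, (α i)⁻¹) * ∏ j ∈ Finset.Icc 1 m, (β j)⁻¹ := by
  intro k
  induction k with
  | zero =>
    intro n m h _ _
    obtain ⟨rfl, rfl⟩ : n = 0 ∧ m = 0 := by omega
    simp [W, cntT]
  | succ k ih =>
    intro n m hnm hα hβ
    rw [Finset.sum_filter, ← Equiv.sum_comp (Fin.snocEquiv (fun _ => Bool))]
    have hext : ∀ p : Bool × (Fin k → Bool),
        (Fin.snocEquiv (fun _ => Bool)) p = Fin.snoc p.2 p.1 := fun p => rfl
    simp only [hext]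
    rw [Fintype.sum_prod_type]
    simp only [cntT_extB_snoc_top, W_snoc]
    rw [Fintype.sum_bool]
    simp only [show (if (true : Bool) = true then 1 else 0) = (1:ℕ) from rfl,
      show (if (false : Bool) = true then 1 else 0) = (0:ℕ) from rfl, if_true, add_zero]
    have stepT : (∑ g : Fin k → Bool,
          if cntT (extB g) k + 1 = n
          then W α β (extB g) k *
            (α (cntT (extB g) k + 1) + β (k + 1 - (cntT (extB g) k + 1)))⁻¹
          else 0)
        = (∑ g ∈ Finset.univ.filter (fun g : Fin k → Bool =>
            cntT (extB g) k + 1 = n), W α β (extB g) k) * (α n + β m)⁻¹ := by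
      rw [Finset.sum_filter, Finset.sum_mul]
      refine Finset.sum_congr rfl fun g _ => ?_
      by_cases h : cntT (extB g) k + 1 = n
      · rw [if_pos h, if_pos h,
          show k + 1 - (cntT (extB g) k + 1) = m from by omega, h]
      · rw [if_neg h, if_neg h, zero_mul]
    have stepF : (∑ g : Fin k → Bool,
          if cntT (extB g) k = n
          then W α β (extB g) k *
            (α (cntT (extB g) k) + β (k + 1 - cntT (extB g) k))⁻¹
          else 0)
        = (∑ g ∈ Finset.univ.filter (fun g : Fin k → Bool =>
            cntT (extB g) k = n), W α β (extB g) k) * (α n + β m)⁻¹ := by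
      rw [Finset.sum_filter, Finset.sum_mul]
      refine Finset.sum_congr rfl fun g _ => ?_
      by_cases h : cntT (extB g) k = n
      · rw [if_pos h, if_pos h,
          show k + 1 - cntT (extB g) k = m from by omega, h]
      · rw [if_neg h, if_neg h, zero_mul]
    rw [stepT, stepF]
    have hT : (∑ g ∈ Finset.univ.filter (fun g : Fin k → Bool =>
          cntT (extB g) k + 1 = n), W α β (extB g) k)
        = if 1 ≤ n then
            (∏ i ∈ Finset.Icc 1 (n - 1), (α i)⁻¹) * ∏ j ∈ Finset.Icc 1 m, (β j)⁻¹
          else 0 := by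
      by_cases hn : 1 ≤ n
      · rw [if_pos hn, ← ih (n - 1) m (by omega) (fun i h1 h2 => hα i h1 (by omega)) hβ]
        refine Finset.sum_congr ?_ fun _ _ => rfl
        refine Finset.filter_congr fun g _ => ?_
        constructor <;> intro h <;> omega
      · rw [if_neg hn]
        refine Finset.sum_eq_zero fun g hg => ?_
        rw [Finset.mem_filter] at hg
        have h2 := hg.2
        omega
    have hF : (∑ g ∈ Finset.univ.filter (fun g : Fin k → Bool =>
          cntT (extB g) k = n), W α β (extB g) k)
        = if 1 ≤ m then
            (∏ i ∈ Finset.Icc 1 n, (α i)⁻¹) * ∏ j ∈ Finset.Icc 1 (m - 1), (β j)⁻¹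
          else 0 := by
      by_cases hm : 1 ≤ m
      · rw [if_pos hm, ← ih n (m - 1) (by omega) hα (fun j h1 h2 => hβ j h1 (by omega))]
      · rw [if_neg hm]
        refine Finset.sum_eq_zero fun g hg => ?_
        rw [Finset.mem_filter] at hg
        have h2 := hg.2
        have := cntT_le (extB g) k
        omega
    rw [hT, hF]
    rcases Nat.eq_zero_or_pos n with hn | hn
    · obtain ⟨m', rfl⟩ : ∃ m', m = m' + 1 := ⟨m - 1, by omega⟩
      subst hn
      have hβm : 0 < β (m' + 1) := hβ _ (by omega) (le_refl _)
      rw [Finset.prod_Icc_succ_top (by omega : 1 ≤ m' + 1) (fun j => (β j)⁻¹)]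
      rw [if_neg (by omega : ¬ (1 ≤ 0)), if_pos (by omega : 1 ≤ m' + 1), hα0,
        Finset.Icc_eq_empty (by omega : ¬ (1:ℕ) ≤ 0)]
      simp only [Nat.add_sub_cancel, zero_add, Finset.prod_empty, one_mul, zero_mul]
    · rcases Nat.eq_zero_or_pos m with hm | hm
      · obtain ⟨n', rfl⟩ : ∃ n', n = n' + 1 := ⟨n - 1, by omega⟩
        subst hm
        have hαn : 0 < α (n' + 1) := hα _ (by omega) (le_refl _)
        rw [Finset.prod_Icc_succ_top (by omega : 1 ≤ n' + 1) (fun i => (α i)⁻¹)]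
        rw [if_pos (by omega : 1 ≤ n' + 1), if_neg (by omega : ¬ (1 ≤ 0)), hβ0,
          Finset.Icc_eq_empty (by omega : ¬ (1:ℕ) ≤ 0)]
        simp only [Nat.add_sub_cancel, add_zero, Finset.prod_empty, mul_one, zero_mul]
      · obtain ⟨n', rfl⟩ : ∃ n', n = n' + 1 := ⟨n - 1, by omega⟩
        obtain ⟨m', rfl⟩ : ∃ m', m = m' + 1 := ⟨m - 1, by omega⟩
        have hαn : 0 < α (n' + 1) := hα _ (by omega) (le_refl _)
        have hβm : 0 < β (m' + 1) := hβ _ (by omega) (le_refl _)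
        rw [if_pos (by omega : 1 ≤ n' + 1), if_pos (by omega : 1 ≤ m' + 1)]
        simp only [Nat.add_sub_cancel]
        rw [Finset.prod_Icc_succ_top (by omega : 1 ≤ n' + 1) (fun i => (α i)⁻¹),
          Finset.prod_Icc_succ_top (by omega : 1 ≤ m' + 1) (fun j => (β j)⁻¹)]
        have h1 : α (n' + 1) ≠ 0 := ne_of_gt hαn
        have h2 : β (m' + 1) ≠ 0 := ne_of_gt hβm
        have h3 : α (n' + 1) + β (m' + 1) ≠ 0 := by positivity
        have key2 : (β (m' + 1))⁻¹ * (α (n' + 1) + β (m' + 1))⁻¹ +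
            (α (n' + 1))⁻¹ * (α (n' + 1) + β (m' + 1))⁻¹
            = (α (n' + 1))⁻¹ * (β (m' + 1))⁻¹ := by
          field_simp
        linear_combination
          ((∏ i ∈ Finset.Icc 1 n', (α i)⁻¹) * ∏ j ∈ Finset.Icc 1 m', (β j)⁻¹) * key2

private def toF {n m : ℕ} (σ : Fin (n + m + 1) → Fin (n + 1) × Fin (m + 1)) :
    Fin (n + m) → Bool :=
  fun i => decide (((σ i.succ).1 : ℕ) = ((σ i.castSucc).1 : ℕ) + 1)

private def toP {n m : ℕ} (f : Fin (n + m) → Bool) :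
    Fin (n + m + 1) → Fin (n + 1) × Fin (m + 1) :=
  fun i => (⟨min n (cntT (extB f) i), by omega⟩,
            ⟨min m ((i : ℕ) - cntT (extB f) i), by omega⟩)

private lemma coords {n m : ℕ} (σ : Fin (n + m + 1) → Fin (n + 1) × Fin (m + 1))
    (h0 : ((σ 0).1 : ℕ) = 0) (h0' : ((σ 0).2 : ℕ) = 0)
    (hstep : ∀ i : Fin (n + m),
      (((σ i.succ).1 : ℕ) = ((σ i.castSucc).1 : ℕ) + 1 ∧
        ((σ i.succ).2 : ℕ) = ((σ i.castSucc).2 : ℕ)) ∨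
      (((σ i.succ).1 : ℕ) = ((σ i.castSucc).1 : ℕ) ∧
        ((σ i.succ).2 : ℕ) = ((σ i.castSucc).2 : ℕ) + 1)) :
    ∀ (i : ℕ) (h : i < n + m + 1),
      ((σ ⟨i, h⟩).1 : ℕ) = cntT (extB (toF σ)) i ∧
      ((σ ⟨i, h⟩).2 : ℕ) = i - cntT (extB (toF σ)) i := by
  intro i
  induction i with
  | zero =>
    intro h
    have e : (⟨0, h⟩ : Fin (n + m + 1)) = 0 := by ext; simp
    rw [e]
    exact ⟨h0, by simpa [cntT] using h0'⟩
  | succ i ih =>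
    intro h
    have hi : i < n + m := by omega
    have hlt : i < n + m + 1 := by omega
    obtain ⟨ih1, ih2⟩ := ih hlt
    have hsucc : (⟨i + 1, h⟩ : Fin (n + m + 1)) = (⟨i, hi⟩ : Fin (n + m)).succ := by
      ext; simp [Fin.val_succ]
    have hcast : (⟨i, hlt⟩ : Fin (n + m + 1)) = (⟨i, hi⟩ : Fin (n + m)).castSucc := by
      ext; simp
    have hext : extB (toF σ) i = toF σ ⟨i, hi⟩ := by simp [extB, hi]
    have hcnt : cntT (extB (toF σ)) (i + 1)
        = cntT (extB (toF σ)) i + (if toF σ ⟨i, hi⟩ then 1 else 0) := by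
      simp [cntT, hext]
    have hle := cntT_le (extB (toF σ)) i
    rcases hstep ⟨i, hi⟩ with ⟨ha, hb⟩ | ⟨ha, hb⟩
    · have hf : toF σ ⟨i, hi⟩ = true := decide_eq_true ha
      have hcnt1 : cntT (extB (toF σ)) (i + 1) = cntT (extB (toF σ)) i + 1 := by
        rw [hcnt, hf]; rfl
      have ha1 : ((σ ⟨i + 1, h⟩).1 : ℕ) = ((σ ⟨i, hlt⟩).1 : ℕ) + 1 := by
        rw [hsucc, hcast]; exact ha
      have hb1 : ((σ ⟨i + 1, h⟩).2 : ℕ) = ((σ ⟨i, hlt⟩).2 : ℕ) := by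
        rw [hsucc, hcast]; exact hb
      exact ⟨by omega, by omega⟩
    · have hf : toF σ ⟨i, hi⟩ = false := decide_eq_false (by omega)
      have hcnt1 : cntT (extB (toF σ)) (i + 1) = cntT (extB (toF σ)) i := by
        rw [hcnt, hf]; simp
      have ha1 : ((σ ⟨i + 1, h⟩).1 : ℕ) = ((σ ⟨i, hlt⟩).1 : ℕ) := by
        rw [hsucc, hcast]; exact ha
      have hb1 : ((σ ⟨i + 1, h⟩).2 : ℕ) = ((σ ⟨i, hlt⟩).2 : ℕ) + 1 := by
        rw [hsucc, hcast]; exact hb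
      exact ⟨by omega, by omega⟩

open scoped Classical in
theorem stmt_1 (n m : ℕ) (α β : ℕ → ℝ)
    (hα0 : α 0 = 0) (hβ0 : β 0 = 0)
    (hα : ∀ i, 1 ≤ i → i ≤ n → 0 < α i)
    (hβ : ∀ j, 1 ≤ j → j ≤ m → 0 < β j) :
    ∑ σ ∈ Finset.univ.filter
        (fun σ : Fin (n + m + 1) → Fin (n + 1) × Fin (m + 1) =>
          ((σ 0).1 : ℕ) = 0 ∧ ((σ 0).2 : ℕ) = 0 ∧
          ((σ (Fin.last (n + m))).1 : ℕ) = n ∧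
          ((σ (Fin.last (n + m))).2 : ℕ) = m ∧
          ∀ i : Fin (n + m),
            (((σ i.succ).1 : ℕ) = ((σ i.castSucc).1 : ℕ) + 1 ∧
              ((σ i.succ).2 : ℕ) = ((σ i.castSucc).2 : ℕ)) ∨
            (((σ i.succ).1 : ℕ) = ((σ i.castSucc).1 : ℕ) ∧
              ((σ i.succ).2 : ℕ) = ((σ i.castSucc).2 : ℕ) + 1)),
      ∏ i : Fin (n + m), (α ((σ i.succ).1 : ℕ) + β ((σ i.succ).2 : ℕ))⁻¹ =
    (∏ i ∈ Finset.Icc 1 n, (α i)⁻¹) * ∏ j ∈ Finset.Icc 1 m, (β j)⁻¹ := by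
  rw [← key α β hα0 hβ0 (n + m) n m rfl hα hβ]
  refine Finset.sum_bij' (fun σ _ => toF σ) (fun f _ => toP f) ?_ ?_ ?_ ?_ ?_
  · -- toF σ lands in the target filter
    intro σ hσ
    rw [Finset.mem_filter] at hσ ⊢
    obtain ⟨-, h0, h0', hl1, hl2, hstep⟩ := hσ
    refine ⟨Finset.mem_univ _, ?_⟩
    have hlt : n + m < n + m + 1 := Nat.lt_succ_self _
    have hc := (coords σ h0 h0' hstep (n + m) hlt).1
    have e : Fin.last (n + m) = (⟨n + m, hlt⟩ : Fin (n + m + 1)) := rfl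
    rw [e] at hl1
    rw [← hc]
    exact hl1
  · -- toP f lands in the source filter
    intro f hf
    rw [Finset.mem_filter] at hf ⊢
    obtain ⟨-, hf⟩ := hf
    have hcle : ∀ i, i ≤ n + m → cntT (extB f) i ≤ n := fun i h => by
      have := cntT_mono (extB f) h; omega
    have hsle : ∀ i, i ≤ n + m → i - cntT (extB f) i ≤ m := fun i h => by
      have h1 := sub_cntT_mono (extB f) h
      have h2 := cntT_le (extB f) (n + m)
      omega
    refine ⟨Finset.mem_univ _, ?_, ?_, ?_, ?_, ?_⟩
    · simp [toP, cntT]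
    · simp [toP, cntT]
    · simp [toP, Fin.val_last, hf]
    · simp [toP, Fin.val_last, hf]
    · intro i
      have hcnt : cntT (extB f) ((i : ℕ) + 1)
          = cntT (extB f) (i : ℕ) + (if f i then 1 else 0) := by
        simp [cntT, extB, i.isLt]
      have l1 := hcle ((i : ℕ) + 1) (by omega)
      have l2 := hcle (i : ℕ) (by omega)
      have l3 := hsle ((i : ℕ) + 1) (by omega)
      have l4 := hsle (i : ℕ) (by omega)
      have l5 := cntT_le (extB f) (i : ℕ)
      have e1 : min n (cntT (extB f) ((i : ℕ) + 1)) = cntT (extB f) ((i : ℕ) + 1) :=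
        min_eq_right l1
      have e2 : min n (cntT (extB f) (i : ℕ)) = cntT (extB f) (i : ℕ) :=
        min_eq_right l2
      have e3 : min m (((i : ℕ) + 1) - cntT (extB f) ((i : ℕ) + 1))
          = ((i : ℕ) + 1) - cntT (extB f) ((i : ℕ) + 1) := min_eq_right l3
      have e4 : min m ((i : ℕ) - cntT (extB f) (i : ℕ))
          = (i : ℕ) - cntT (extB f) (i : ℕ) := min_eq_right l4
      cases hfi : f i with
      | true =>
        rw [hfi] at hcnt
        norm_num at hcnt
        left
        constructor <;> simp only [toP, Fin.val_succ, Fin.coe_castSucc, e1, e2, e3, e4] <;>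
          omega
      | false =>
        rw [hfi] at hcnt
        norm_num at hcnt
        right
        constructor <;> simp only [toP, Fin.val_succ, Fin.coe_castSucc, e1, e2, e3, e4] <;>
          omega
  · -- left inverse
    intro σ hσ
    rw [Finset.mem_filter] at hσ
    obtain ⟨-, h0, h0', hl1, hl2, hstep⟩ := hσ
    funext i
    have hc := coords σ h0 h0' hstep (i : ℕ) i.isLt
    simp only [Fin.eta] at hc
    have b1 : ((σ i).1 : ℕ) ≤ n := by omega
    have b2 : ((σ i).2 : ℕ) ≤ m := by omega
    refine Prod.ext (Fin.ext ?_) (Fin.ext ?_)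
    · show min n (cntT (extB (toF σ)) (i : ℕ)) = ((σ i).1 : ℕ)
      omega
    · show min m ((i : ℕ) - cntT (extB (toF σ)) (i : ℕ)) = ((σ i).2 : ℕ)
      omega
  · -- right inverse
    intro f hf
    rw [Finset.mem_filter] at hf
    obtain ⟨-, hf⟩ := hf
    have hcle : ∀ i, i ≤ n + m → cntT (extB f) i ≤ n := fun i h => by
      have := cntT_mono (extB f) h; omega
    funext i
    have hcnt : cntT (extB f) ((i : ℕ) + 1)
        = cntT (extB f) (i : ℕ) + (if f i then 1 else 0) := by
      simp [cntT, extB, i.isLt]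
    have l1 := hcle ((i : ℕ) + 1) (by omega)
    have l2 := hcle (i : ℕ) (by omega)
    have e1 : min n (cntT (extB f) ((i : ℕ) + 1)) = cntT (extB f) ((i : ℕ) + 1) :=
      min_eq_right l1
    have e2 : min n (cntT (extB f) (i : ℕ)) = cntT (extB f) (i : ℕ) :=
      min_eq_right l2
    show toF (toP f) i = f i
    simp only [toF, toP, Fin.val_succ, Fin.coe_castSucc, e1, e2]
    cases hfi : f i with
    | true =>
      rw [hfi] at hcnt
      norm_num at hcnt
      apply decide_eq_true
      omega
    | false =>
      rw [hfi] at hcnt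
      norm_num at hcnt
      apply decide_eq_false
      omega
  · -- weights agree
    intro σ hσ
    rw [Finset.mem_filter] at hσ
    obtain ⟨-, h0, h0', hl1, hl2, hstep⟩ := hσ
    show _ = W α β (extB (toF σ)) (n + m)
    simp only [W]
    rw [← Fin.prod_univ_eq_prod_range
      (fun j => (α (cntT (extB (toF σ)) (j + 1))
        + β ((j + 1) - cntT (extB (toF σ)) (j + 1)))⁻¹) (n + m)]
    refine Finset.prod_congr rfl fun i _ => ?_
    have hlt : (i : ℕ) + 1 < n + m + 1 := by omega
    have hc := coords σ h0 h0' hstep ((i : ℕ) + 1) hlt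
    have e : (⟨(i : ℕ) + 1, hlt⟩ : Fin (n + m + 1)) = i.succ := rfl
    rw [e] at hc
    rw [hc.1, hc.2]
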